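/- In the ring of formal power series in two variables X, Y over ℚ, the generating function G = Σ_{n≥1} Σ_{k≥1} p_{n,k} X^k Y^n satisfies (1 − Y − X·Y²)·G = X·Y; equivalently, G = XY/(1 − Y − XY²). -/

import Mathlib

/-- `F n` is the Fibonacci number in the convention `F 1 = 1, F 2 = 2`,
`F (n+1) = F n + F (n-1)`, i.e. `F n = fib (n+1)`. -/
def F (n : ℕ) : ℕ := Nat.fib (n + 1)

/-- A Zeckendorf decomposition of `N`: a finite set `S` of positive indices
containing no two consecutive integers with `N = ∑_{i ∈ S} F i`. -/
def IsZeckendorf (N : ℕ) (S : Finset ℕ) : Prop :=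
  (∀ i ∈ S, 1 ≤ i) ∧ (∀ i ∈ S, i + 1 ∉ S) ∧ ∑ i ∈ S, F i = N

/-- `p n k` is the number of integers `N ∈ [F n, F (n+1))` whose Zeckendorf
decomposition has exactly `k` summands. -/
noncomputable def p (n k : ℕ) : ℕ :=
  {N : ℕ | F n ≤ N ∧ N < F (n + 1) ∧
    ∃ S : Finset ℕ, IsZeckendorf N S ∧ S.card = k}.ncard

/-- The generating function `G = ∑_{n ≥ 1} ∑_{k ≥ 1} p_{n,k} X^k Y^n`, as a
formal power series in two variables over `ℚ`; variable `0` is `X`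
(tracking `k`) and variable `1` is `Y` (tracking `n`). -/
noncomputable def G : MvPowerSeries (Fin 2) ℚ :=
  fun e => if 1 ≤ e 0 ∧ 1 ≤ e 1 then (p (e 1) (e 0) : ℚ) else 0

namespace ZeckAux

lemma F_pos (n : ℕ) : 0 < F n := Nat.fib_pos.2 (Nat.succ_pos n)

lemma F_mono {a b : ℕ} (h : a ≤ b) : F a ≤ F b := Nat.fib_mono (by omega)

lemma F_add (n : ℕ) : F (n + 2) = F (n + 1) + F n := by
  show Nat.fib (n + 3) = _
  rw [Nat.fib_add_two]
  simp [F]; omega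

lemma F_one : F 1 = 1 := rfl
lemma F_two : F 2 = 2 := rfl

/-- Sum of non-consecutive positive-index Fibonacci numbers bounded by `m` is `< F (m+1)`. -/
lemma sum_lt : ∀ m : ℕ, ∀ S : Finset ℕ, (∀ i ∈ S, 1 ≤ i) → (∀ i ∈ S, i + 1 ∉ S) →
    (∀ i ∈ S, i ≤ m) → ∑ i ∈ S, F i < F (m + 1) := by
  intro m
  induction m using Nat.strong_induction_on with
  | _ m ih =>
    match m with
    | 0 =>
      intro S hpos _ hle
      have : S = ∅ := by
        apply Finset.eq_empty_iff_forall_notMem.2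
        intro i hi; have := hpos i hi; have := hle i hi; omega
      simp [this, F_one]
    | 1 =>
      intro S hpos _ hle
      have hsub : S ⊆ {1} := by
        intro i hi; have := hpos i hi; have := hle i hi
        simp [Finset.mem_singleton]; omega
      calc ∑ i ∈ S, F i ≤ ∑ i ∈ ({1} : Finset ℕ), F i :=
            Finset.sum_le_sum_of_subset hsub
        _ = 1 := by simp [F_one]
        _ < F 2 := by simp [F_two]
    | (a + 2) =>
      intro S hpos hnc hle
      by_cases h : a + 2 ∈ S
      · have herase : ∀ i ∈ S.erase (a + 2), i ≤ a := by
          intro i hi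
          rcases Finset.mem_erase.1 hi with ⟨hne, hiS⟩
          have h2 := hle i hiS
          by_contra hgt
          have hEq : i = a + 1 := by omega
          subst hEq
          exact hnc _ hiS h
        have hnc' : ∀ i ∈ S.erase (a + 2), i + 1 ∉ S.erase (a + 2) := by
          intro i hi hc
          exact hnc i (Finset.mem_of_mem_erase hi) (Finset.mem_of_mem_erase hc)
        have h1 : ∑ i ∈ S.erase (a + 2), F i < F (a + 1) :=
          ih a (by omega) _ (fun i hi => hpos i (Finset.mem_of_mem_erase hi)) hnc' herase
        have hsum : ∑ i ∈ S, F i = F (a + 2) + ∑ i ∈ S.erase (a + 2), F i :=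
          (Finset.add_sum_erase _ _ h).symm
        have hF : F (a + 2 + 1) = F (a + 2) + F (a + 1) := F_add (a + 1)
        omega
      · have hle' : ∀ i ∈ S, i ≤ a + 1 := by
          intro i hi
          have h2 := hle i hi
          by_contra hgt
          have hEq : i = a + 2 := by omega
          exact h (hEq ▸ hi)
        have h1 := ih (a + 1) (by omega) S hpos hnc hle'
        have h2 : F (a + 1 + 1) = F (a + 2) := rfl
        have hm : F (a + 2) ≤ F (a + 2 + 1) := F_mono (by omega)
        omega

/-- Uniqueness of Zeckendorf decompositions (as finsets). -/
lemma zeck_unique : ∀ N : ℕ, ∀ S T : Finset ℕ,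
    (∀ i ∈ S, 1 ≤ i) → (∀ i ∈ S, i + 1 ∉ S) →
    (∀ i ∈ T, 1 ≤ i) → (∀ i ∈ T, i + 1 ∉ T) →
    ∑ i ∈ S, F i = N → ∑ i ∈ T, F i = N → S = T := by
  intro N
  induction N using Nat.strong_induction_on with
  | _ N ih =>
    intro S T hSp hSnc hTp hTnc hS hT
    rcases Nat.eq_zero_or_pos N with h0 | hpos
    · subst h0
      have hSe : S = ∅ := by
        by_contra h
        obtain ⟨i, hi⟩ := Finset.nonempty_of_ne_empty h
        have : 0 < ∑ i ∈ S, F i :=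
          Finset.sum_pos' (fun j _ => Nat.zero_le _) ⟨i, hi, F_pos i⟩
        omega
      have hTe : T = ∅ := by
        by_contra h
        obtain ⟨i, hi⟩ := Finset.nonempty_of_ne_empty h
        have : 0 < ∑ i ∈ T, F i :=
          Finset.sum_pos' (fun j _ => Nat.zero_le _) ⟨i, hi, F_pos i⟩
        omega
      rw [hSe, hTe]
    · have hSne : S.Nonempty := by
        by_contra h
        rw [Finset.not_nonempty_iff_eq_empty] at h
        rw [h] at hS; simp at hS; omega
      have hTne : T.Nonempty := by
        by_contra h
        rw [Finset.not_nonempty_iff_eq_empty] at h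
        rw [h] at hT; simp at hT; omega
      obtain ⟨m, hmS, hmaxS⟩ : ∃ m, m ∈ S ∧ ∀ i ∈ S, i ≤ m :=
        ⟨S.max' hSne, S.max'_mem hSne, fun i hi => S.le_max' i hi⟩
      obtain ⟨m', hmT, hmaxT⟩ : ∃ m, m ∈ T ∧ ∀ i ∈ T, i ≤ m :=
        ⟨T.max' hTne, T.max'_mem hTne, fun i hi => T.le_max' i hi⟩
      have hSlow : F m ≤ N := hS ▸ Finset.single_le_sum (fun i _ => Nat.zero_le _) hmS
      have hTlow : F m' ≤ N := hT ▸ Finset.single_le_sum (fun i _ => Nat.zero_le _) hmT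
      have hSup : N < F (m + 1) := hS ▸ sum_lt m S hSp hSnc hmaxS
      have hTup : N < F (m' + 1) := hT ▸ sum_lt m' T hTp hTnc hmaxT
      have hmm : m = m' := by
        by_contra hne
        rcases Nat.lt_or_ge m m' with h1 | h1
        · have : F (m + 1) ≤ F m' := F_mono (by omega)
          omega
        · have : F (m' + 1) ≤ F m := F_mono (by omega)
          omega
      subst hmm
      have hNd : N - F m < N := by have := F_pos m; omega
      have hSerase : ∑ i ∈ S.erase m, F i = N - F m := by
        have := (Finset.add_sum_erase _ F hmS).symm
        omega
      have hTerase : ∑ i ∈ T.erase m, F i = N - F m := by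
        have := (Finset.add_sum_erase _ F hmT).symm
        omega
      have heq : S.erase m = T.erase m :=
        ih (N - F m) hNd _ _
          (fun i hi => hSp i (Finset.mem_of_mem_erase hi))
          (fun i hi hc => hSnc i (Finset.mem_of_mem_erase hi) (Finset.mem_of_mem_erase hc))
          (fun i hi => hTp i (Finset.mem_of_mem_erase hi))
          (fun i hi hc => hTnc i (Finset.mem_of_mem_erase hi) (Finset.mem_of_mem_erase hc))
          hSerase hTerase
      calc S = insert m (S.erase m) := (Finset.insert_erase hmS).symm
        _ = insert m (T.erase m) := by rw [heq]
        _ = T := Finset.insert_erase hmT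

/-- The finset of valid index sets with max exactly `n` and cardinality `k`. -/
def A (n k : ℕ) : Finset (Finset ℕ) :=
  (Finset.range (n + 1)).powerset.filter fun S =>
    (∀ i ∈ S, 1 ≤ i) ∧ (∀ i ∈ S, i + 1 ∉ S) ∧ n ∈ S ∧ S.card = k

lemma mem_A {n k : ℕ} {S : Finset ℕ} : S ∈ A n k ↔
    (∀ i ∈ S, 1 ≤ i) ∧ (∀ i ∈ S, i + 1 ∉ S) ∧ n ∈ S ∧ (∀ i ∈ S, i ≤ n) ∧ S.card = k := by
  simp only [A, Finset.mem_filter, Finset.mem_powerset, Finset.subset_iff, Finset.mem_range,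
    Nat.lt_succ_iff]
  tauto

lemma p_eq {n : ℕ} (hn : 1 ≤ n) (k : ℕ) : p n k = (A n k).card := by
  have hset : {N : ℕ | F n ≤ N ∧ N < F (n + 1) ∧
      ∃ S : Finset ℕ, IsZeckendorf N S ∧ S.card = k}
      = (fun S : Finset ℕ => ∑ i ∈ S, F i) '' ↑(A n k) := by
    ext N
    simp only [Set.mem_setOf_eq, Set.mem_image, Finset.mem_coe]
    constructor
    · rintro ⟨hl, hu, S, ⟨hpos, hnc, hsum⟩, hcard⟩
      have hSne : S.Nonempty := by
        by_contra h
        rw [Finset.not_nonempty_iff_eq_empty] at h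
        subst h
        simp only [Finset.sum_empty] at hsum
        have := F_pos n
        omega
      obtain ⟨m, hmS, hmaxS⟩ : ∃ m, m ∈ S ∧ ∀ i ∈ S, i ≤ m :=
        ⟨S.max' hSne, S.max'_mem hSne, fun i hi => S.le_max' i hi⟩
      have hlow : F m ≤ N := hsum ▸ Finset.single_le_sum (fun i _ => Nat.zero_le _) hmS
      have hup : N < F (m + 1) := hsum ▸ sum_lt m S hpos hnc hmaxS
      have hmn : m = n := by
        by_contra hne
        rcases Nat.lt_or_ge m n with h1 | h1
        · have := F_mono (show m + 1 ≤ n by omega)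
          omega
        · have := F_mono (show n + 1 ≤ m by omega)
          omega
      subst hmn
      exact ⟨S, mem_A.2 ⟨hpos, hnc, hmS, hmaxS, hcard⟩, hsum⟩
    · rintro ⟨S, hS, rfl⟩
      obtain ⟨hpos, hnc, hmem, hbound, hcard⟩ := mem_A.1 hS
      exact ⟨Finset.single_le_sum (fun i _ => Nat.zero_le _) hmem,
        sum_lt n S hpos hnc hbound, S, ⟨hpos, hnc, rfl⟩, hcard⟩
  rw [p, hset, Set.ncard_image_of_injOn, Set.ncard_coe_finset]
  intro S hS T hT hsum
  obtain ⟨hpos, hnc, _, _, _⟩ := mem_A.1 (Finset.mem_coe.1 hS)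
  obtain ⟨hpos', hnc', _, _, _⟩ := mem_A.1 (Finset.mem_coe.1 hT)
  exact zeck_unique _ S T hpos hnc hpos' hnc' rfl hsum.symm

lemma A_zero (n : ℕ) : A n 0 = ∅ := by
  apply Finset.eq_empty_iff_forall_notMem.2
  intro S hS
  obtain ⟨_, _, hmem, _, hcard⟩ := mem_A.1 hS
  have : S.Nonempty := ⟨n, hmem⟩
  have := Finset.card_pos.2 this
  omega

lemma A_singleton_aux {n k : ℕ} (hn : n = 1 ∨ n = 2) {S : Finset ℕ} (hS : S ∈ A n k) :
    S = {n} := by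
  obtain ⟨hpos, hnc, hmem, hbound, _⟩ := mem_A.1 hS
  apply Finset.eq_singleton_iff_unique_mem.2
  refine ⟨hmem, fun i hi => ?_⟩
  have h1 := hpos i hi
  have h2 := hbound i hi
  rcases hn with rfl | rfl
  · omega
  · by_contra hne
    have : i = 1 := by omega
    subst this
    exact hnc 1 hi hmem

lemma A_card_small {n : ℕ} (hn : n = 1 ∨ n = 2) (k : ℕ) :
    (A n k).card = if k = 1 then 1 else 0 := by
  by_cases hk : k = 1
  · subst hk
    rw [if_pos rfl]
    have : A n 1 = {({n} : Finset ℕ)} := by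
      apply Finset.Subset.antisymm
      · intro S hS
        simp [A_singleton_aux hn hS]
      · intro S hS
        rw [Finset.mem_singleton] at hS
        subst hS
        apply mem_A.2
        refine ⟨?_, ?_, Finset.mem_singleton_self n, ?_, Finset.card_singleton n⟩
        · intro i hi
          rw [Finset.mem_singleton] at hi
          omega
        · intro i hi hc
          rw [Finset.mem_singleton] at hi
          rw [Finset.mem_singleton] at hc
          omega
        · intro i hi
          rw [Finset.mem_singleton] at hi
          omega
    rw [this, Finset.card_singleton]
  · rw [if_neg hk, Finset.card_eq_zero]
    apply Finset.eq_empty_iff_forall_notMem.2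
    intro S hS
    have h1 := A_singleton_aux hn hS
    obtain ⟨_, _, _, _, hcard⟩ := mem_A.1 hS
    subst h1
    rw [Finset.card_singleton] at hcard
    exact hk hcard.symm

lemma A_rec (n k : ℕ) : (A (n + 2) (k + 1)).card = (A (n + 1) (k + 1)).card + (A n k).card := by
  classical
  have h1 : ((A (n + 2) (k + 1)).filter (fun S => n ∈ S)).card = (A n k).card := by
    apply Finset.card_nbij' (fun S => S.erase (n + 2)) (fun T => insert (n + 2) T)
    · intro S hS
      obtain ⟨hSA, hnS⟩ := Finset.mem_filter.1 hS
      obtain ⟨hpos, hnc, hmem, hbound, hcard⟩ := mem_A.1 hSA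
      apply mem_A.2
      refine ⟨?_, ?_, ?_, ?_, ?_⟩
      · intro i hi; exact hpos i (Finset.mem_of_mem_erase hi)
      · intro i hi hc; exact hnc i (Finset.mem_of_mem_erase hi) (Finset.mem_of_mem_erase hc)
      · exact Finset.mem_erase.2 ⟨by omega, hnS⟩
      · intro i hi
        rcases Finset.mem_erase.1 hi with ⟨hne, hiS⟩
        have := hbound i hiS
        by_contra hgt
        have hEq : i = n + 1 := by omega
        subst hEq
        exact hnc _ hiS hmem
      · rw [Finset.card_erase_of_mem hmem, hcard]
        omega
    · intro T hT
      obtain ⟨hpos, hnc, hmem, hbound, hcard⟩ := mem_A.1 hT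
      have hnotin : n + 2 ∉ T := fun hc => by have := hbound _ hc; omega
      apply Finset.mem_filter.2
      refine ⟨mem_A.2 ⟨?_, ?_, Finset.mem_insert_self _ _, ?_, ?_⟩,
        Finset.mem_insert_of_mem hmem⟩
      · intro i hi
        rcases Finset.mem_insert.1 hi with rfl | hi
        · omega
        · exact hpos i hi
      · intro i hi hc
        rcases Finset.mem_insert.1 hi with rfl | hi
        · rcases Finset.mem_insert.1 hc with h | h
          · omega
          · have := hbound _ h; omega
        · rcases Finset.mem_insert.1 hc with h | h
          · have := hbound _ hi; omega
          · exact hnc i hi h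
      · intro i hi
        rcases Finset.mem_insert.1 hi with rfl | hi
        · omega
        · have := hbound _ hi; omega
      · rw [Finset.card_insert_of_notMem hnotin, hcard]
    · intro S hS
      obtain ⟨hSA, _⟩ := Finset.mem_filter.1 hS
      obtain ⟨_, _, hmem, _, _⟩ := mem_A.1 hSA
      exact Finset.insert_erase hmem
    · intro T hT
      obtain ⟨_, _, _, hbound, _⟩ := mem_A.1 hT
      have hnotin : n + 2 ∉ T := fun hc => by have := hbound _ hc; omega
      exact Finset.erase_insert hnotin
  have h2 : ((A (n + 2) (k + 1)).filter (fun S => ¬ n ∈ S)).card = (A (n + 1) (k + 1)).card := by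
    apply Finset.card_nbij' (fun S => insert (n + 1) (S.erase (n + 2)))
      (fun T => insert (n + 2) (T.erase (n + 1)))
    · intro S hS
      obtain ⟨hSA, hnS⟩ := Finset.mem_filter.1 hS
      obtain ⟨hpos, hnc, hmem, hbound, hcard⟩ := mem_A.1 hSA
      have hn1 : n + 1 ∉ S := fun hc => hnc _ hc hmem
      apply mem_A.2
      refine ⟨?_, ?_, Finset.mem_insert_self _ _, ?_, ?_⟩
      · intro i hi
        rcases Finset.mem_insert.1 hi with rfl | hi
        · omega
        · exact hpos i (Finset.mem_of_mem_erase hi)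
      · intro i hi hc
        rcases Finset.mem_insert.1 hi with rfl | hi
        · rcases Finset.mem_insert.1 hc with h | h
          · omega
          · rcases Finset.mem_erase.1 h with ⟨hne, _⟩
            omega
        · rcases Finset.mem_erase.1 hi with ⟨hne, hiS⟩
          rcases Finset.mem_insert.1 hc with h | h
          · have : i = n := by omega
            subst this
            exact hnS hiS
          · exact hnc i hiS (Finset.mem_of_mem_erase h)
      · intro i hi
        rcases Finset.mem_insert.1 hi with rfl | hi
        · omega
        · rcases Finset.mem_erase.1 hi with ⟨hne, hiS⟩
          have := hbound i hiS
          omega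
      · rw [Finset.card_insert_of_notMem (fun hc => hn1 (Finset.mem_of_mem_erase hc)),
          Finset.card_erase_of_mem hmem, hcard]
        omega
    · intro T hT
      obtain ⟨hpos, hnc, hmem, hbound, hcard⟩ := mem_A.1 hT
      have hnT : n ∉ T := fun hc => hnc _ hc hmem
      have hn2 : n + 2 ∉ T := fun hc => by have := hbound _ hc; omega
      apply Finset.mem_filter.2
      constructor
      · apply mem_A.2
        refine ⟨?_, ?_, Finset.mem_insert_self _ _, ?_, ?_⟩
        · intro i hi
          rcases Finset.mem_insert.1 hi with rfl | hi
          · omega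
          · exact hpos i (Finset.mem_of_mem_erase hi)
        · intro i hi hc
          rcases Finset.mem_insert.1 hi with rfl | hi
          · rcases Finset.mem_insert.1 hc with h | h
            · omega
            · rcases Finset.mem_erase.1 h with ⟨_, hiT⟩
              have := hbound _ hiT
              omega
          · rcases Finset.mem_erase.1 hi with ⟨hne, hiT⟩
            rcases Finset.mem_insert.1 hc with h | h
            · omega
            · exact hnc i hiT (Finset.mem_of_mem_erase h)
        · intro i hi
          rcases Finset.mem_insert.1 hi with rfl | hi
          · omega
          · rcases Finset.mem_erase.1 hi with ⟨_, hiT⟩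
            have := hbound _ hiT
            omega
        · rw [Finset.card_insert_of_notMem (fun hc => hn2 (Finset.mem_of_mem_erase hc)),
            Finset.card_erase_of_mem hmem, hcard]
          omega
      · intro hc
        rcases Finset.mem_insert.1 hc with h | h
        · omega
        · exact hnT (Finset.mem_of_mem_erase h)
    · intro S hS
      obtain ⟨hSA, _⟩ := Finset.mem_filter.1 hS
      obtain ⟨_, hnc, hmem, _, _⟩ := mem_A.1 hSA
      have hn1 : n + 1 ∉ S := fun hc => hnc _ hc hmem
      dsimp only
      rw [Finset.erase_insert (fun hc => hn1 (Finset.mem_of_mem_erase hc)),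
        Finset.insert_erase hmem]
    · intro T hT
      obtain ⟨_, _, hmem, hbound, _⟩ := mem_A.1 hT
      have hn2 : n + 2 ∉ T := fun hc => by have := hbound _ hc; omega
      dsimp only
      rw [Finset.erase_insert (fun hc => hn2 (Finset.mem_of_mem_erase hc)),
        Finset.insert_erase hmem]
  have h3 := Finset.card_filter_add_card_filter_not (s := A (n + 2) (k + 1))
    (p := fun S => n ∈ S)
  omega

lemma p_one (k : ℕ) : p 1 k = if k = 1 then 1 else 0 := by
  rw [p_eq le_rfl, A_card_small (Or.inl rfl)]

lemma p_two (k : ℕ) : p 2 k = p 1 k := by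
  rw [p_eq one_le_two, p_eq le_rfl, A_card_small (Or.inr rfl), A_card_small (Or.inl rfl)]

lemma p_rec (n k : ℕ) : p (n + 3) (k + 1) = p (n + 2) (k + 1) + p (n + 1) k := by
  rw [p_eq (by omega), p_eq (by omega), p_eq (by omega)]
  exact A_rec (n + 1) k

lemma p_zero (n : ℕ) : p (n + 1) 0 = 0 := by
  rw [p_eq (by omega), A_zero, Finset.card_empty]

end ZeckAux

open ZeckAux in
theorem generating_function_eq :
    (1 - MvPowerSeries.X 1 - MvPowerSeries.X 0 * MvPowerSeries.X 1 ^ 2) * G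
      = MvPowerSeries.X 0 * MvPowerSeries.X 1 := by
  have key : G = MvPowerSeries.X 0 * MvPowerSeries.X 1 + MvPowerSeries.X 1 * G
      + MvPowerSeries.X 0 * MvPowerSeries.X 1 ^ 2 * G := by
    apply MvPowerSeries.ext
    intro e
    have cG : ∀ d : Fin 2 →₀ ℕ, MvPowerSeries.coeff d G
        = if 1 ≤ d 0 ∧ 1 ≤ d 1 then (p (d 1) (d 0) : ℚ) else 0 := fun d => rfl
    have c1 : MvPowerSeries.coeff e
          (MvPowerSeries.X 0 * MvPowerSeries.X 1 : MvPowerSeries (Fin 2) ℚ)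
        = if e = Finsupp.single 0 1 + Finsupp.single 1 1 then 1 else 0 := by
      rw [MvPowerSeries.X_def, MvPowerSeries.X_def, MvPowerSeries.monomial_mul_monomial,
        one_mul, MvPowerSeries.coeff_monomial]
    have c2 : MvPowerSeries.coeff e (MvPowerSeries.X 1 * G)
        = if Finsupp.single 1 1 ≤ e
          then MvPowerSeries.coeff (e - Finsupp.single 1 1) G else 0 := by
      rw [MvPowerSeries.X_def, MvPowerSeries.coeff_monomial_mul]
      simp only [one_mul]
    have c3 : MvPowerSeries.coeff e (MvPowerSeries.X 0 * MvPowerSeries.X 1 ^ 2 * G)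
        = if Finsupp.single 0 1 + Finsupp.single 1 2 ≤ e
          then MvPowerSeries.coeff (e - (Finsupp.single 0 1 + Finsupp.single 1 2)) G
          else 0 := by
      rw [MvPowerSeries.X_pow_eq, MvPowerSeries.X_def, MvPowerSeries.monomial_mul_monomial,
        one_mul, MvPowerSeries.coeff_monomial_mul]
      simp only [one_mul]
    have h01 : (0 : Fin 2) ≠ 1 := by decide
    have h10 : (1 : Fin 2) ≠ 0 := by decide
    have heq : (e = Finsupp.single 0 1 + Finsupp.single 1 1) ↔ (e 0 = 1 ∧ e 1 = 1) := by
      rw [Finsupp.ext_iff, Fin.forall_fin_two]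
      simp [Finsupp.add_apply, Finsupp.single_apply, h01, h10]
    have hle1 : (Finsupp.single 1 1 ≤ e) ↔ 1 ≤ e 1 := Finsupp.single_le_iff
    have hle2 : (Finsupp.single 0 1 + Finsupp.single 1 2 ≤ e) ↔ (1 ≤ e 0 ∧ 2 ≤ e 1) := by
      rw [Finsupp.le_def, Fin.forall_fin_two]
      simp [Finsupp.add_apply, Finsupp.single_apply, h01, h10]
    have hv1 : ((e - Finsupp.single 1 1 : Fin 2 →₀ ℕ)) 0 = e 0 := by
      simp [Finsupp.tsub_apply, Finsupp.single_apply, h10]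
    have hv2 : ((e - Finsupp.single 1 1 : Fin 2 →₀ ℕ)) 1 = e 1 - 1 := by
      simp [Finsupp.tsub_apply, Finsupp.single_apply]
    have hv3 : ((e - (Finsupp.single 0 1 + Finsupp.single 1 2) : Fin 2 →₀ ℕ)) 0
        = e 0 - 1 := by
      simp [Finsupp.tsub_apply, Finsupp.add_apply, Finsupp.single_apply, h10]
    have hv4 : ((e - (Finsupp.single 0 1 + Finsupp.single 1 2) : Fin 2 →₀ ℕ)) 1
        = e 1 - 2 := by
      simp [Finsupp.tsub_apply, Finsupp.add_apply, Finsupp.single_apply, h01]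
    rw [map_add, map_add, c1, c2, c3, cG, cG, cG]
    simp only [heq, hle1, hle2, hv1, hv2, hv3, hv4]
    generalize e 0 = k
    generalize e 1 = n
    rcases n with _ | _ | _ | n
    · norm_num
    · -- n = 1
      rcases k with _ | k
      · norm_num
      · simp only [show (1:ℕ) - 1 = 0 from rfl]
        rcases k with _ | k
        · norm_num [p_one]
        · norm_num [p_one]
    · -- n = 2
      rcases k with _ | k
      · norm_num
      · norm_num [p_two]
    · -- n = n + 3
      rcases k with _ | _ | k
      · norm_num
      · have h := p_rec n 0
        have h0 := p_zero n
        norm_num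
        push_cast [h, h0]
        ring
      · have h := p_rec n (k + 1)
        norm_num
        push_cast [h]
        ring
  linear_combination key
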